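/- The definite integral ∫_{-1/2}^{1/2} arcsin((1-2x)/√5) dx equals arctan(2) + 1/2 - √5/2. -/

import Mathlib

open Real

noncomputable def Faux (x : ℝ) : ℝ :=
  -((1 - 2*x)/2 * Real.arcsin ((1 - 2*x)/Real.sqrt 5))
    - Real.sqrt 5 / 2 * Real.sqrt (1 - ((1 - 2*x)/Real.sqrt 5)^2)

lemma s5pos : (0:ℝ) < Real.sqrt 5 := Real.sqrt_pos.2 (by norm_num)

lemma Faux_deriv {x : ℝ} (hx : x ∈ Set.Icc (-(1:ℝ)/2) (1/2)) :
    HasDerivAt Faux (Real.arcsin ((1 - 2*x)/Real.sqrt 5)) x := by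
  have h5 : Real.sqrt 5 * Real.sqrt 5 = 5 := Real.mul_self_sqrt (by norm_num)
  set u : ℝ := (1 - 2*x)/Real.sqrt 5 with hu_def
  have hub : 0 ≤ 1 - 2*x ∧ 1 - 2*x ≤ 2 := by
    constructor <;> [linarith [hx.2]; linarith [hx.1]]
  have hu0 : 0 ≤ u := div_nonneg hub.1 s5pos.le
  have hu1 : u < 1 := by
    rw [hu_def, div_lt_one s5pos]
    nlinarith [h5, s5pos, hub.2]
  have husq : 1 - u^2 > 0 := by nlinarith
  have hlin : HasDerivAt (fun x : ℝ => 1 - 2*x) (-2) x := by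
    simpa using ((hasDerivAt_id x).const_mul 2).const_sub 1
  have hu : HasDerivAt (fun x : ℝ => (1 - 2*x)/Real.sqrt 5) (-2/Real.sqrt 5) x :=
    hlin.div_const _
  have harc : HasDerivAt (fun x : ℝ => Real.arcsin ((1 - 2*x)/Real.sqrt 5))
      (1 / Real.sqrt (1 - u^2) * (-2/Real.sqrt 5)) x :=
    (Real.hasDerivAt_arcsin (by linarith) (by linarith)).comp x hu
  have hhalf : HasDerivAt (fun x : ℝ => (1 - 2*x)/2) (-1) x := by
    simpa using hlin.div_const 2
  have hprod : HasDerivAt (fun x : ℝ => (1 - 2*x)/2 * Real.arcsin ((1 - 2*x)/Real.sqrt 5))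
      ((-1) * Real.arcsin u + (1 - 2*x)/2 * (1 / Real.sqrt (1 - u^2) * (-2/Real.sqrt 5))) x :=
    hhalf.mul harc
  have hsq : HasDerivAt (fun x : ℝ => 1 - ((1 - 2*x)/Real.sqrt 5)^2)
      (-(2 * u ^ 1 * (-2/Real.sqrt 5))) x := by
    simpa using (hu.pow 2).const_sub 1
  have hroot : HasDerivAt (fun x : ℝ => Real.sqrt (1 - ((1 - 2*x)/Real.sqrt 5)^2))
      (1 / (2 * Real.sqrt (1 - u^2)) * (-(2 * u ^ 1 * (-2/Real.sqrt 5)))) x :=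
    (Real.hasDerivAt_sqrt (ne_of_gt husq)).comp x hsq
  have htot := (hprod.neg).sub ((hroot.const_mul (Real.sqrt 5 / 2)))
  have hF : Faux = fun x : ℝ => -((1 - 2*x)/2 * Real.arcsin ((1 - 2*x)/Real.sqrt 5))
      - Real.sqrt 5 / 2 * Real.sqrt (1 - ((1 - 2*x)/Real.sqrt 5)^2) := rfl
  rw [hF]
  convert htot using 1
  case e'_4 => rfl
  case e'_5 => rfl
  case e'_8 => rfl
  have hrt : Real.sqrt (1 - u^2) > 0 := Real.sqrt_pos.2 husq
  have hu5 : (1 - 2*x) = u * Real.sqrt 5 := by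
    rw [hu_def, div_mul_cancel₀ _ s5pos.ne']
  rw [show (1 - 2*x) = u * Real.sqrt 5 from hu5]
  field_simp
  ring

theorem integral_I1 :
    ∫ x in (-(1:ℝ)/2)..(1/2), Real.arcsin ((1 - 2*x) / Real.sqrt 5)
      = Real.arctan 2 + 1/2 - Real.sqrt 5 / 2 := by
  have h5 : Real.sqrt 5 * Real.sqrt 5 = 5 := Real.mul_self_sqrt (by norm_num)
  have hcont : Continuous fun x : ℝ => Real.arcsin ((1 - 2*x) / Real.sqrt 5) :=
    Real.continuous_arcsin.comp ((continuous_const.sub (continuous_const.mul continuous_id)).div_const _)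
  have hle : (-(1:ℝ)/2) ≤ 1/2 := by norm_num
  have key := intervalIntegral.integral_eq_sub_of_hasDerivAt
    (f := Faux) (f' := fun x => Real.arcsin ((1 - 2*x) / Real.sqrt 5))
    (a := -(1:ℝ)/2) (b := 1/2)
    (fun x hx => Faux_deriv (by rwa [Set.uIcc_of_le hle] at hx))
    (hcont.intervalIntegrable _ _)
  rw [key]
  have h1 : Faux (1/2) = -(Real.sqrt 5 / 2) := by
    simp [Faux]
  have h2 : Faux (-(1:ℝ)/2) = -(Real.arcsin (2/Real.sqrt 5)) - 1/2 := by
    have : (1 - 2*(-(1:ℝ)/2)) = 2 := by norm_num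
    rw [Faux, this]
    have hv : 1 - (2/Real.sqrt 5)^2 = 1/5 := by
      rw [div_pow]; rw [sq_sqrt (by norm_num : (0:ℝ) ≤ 5)]; norm_num
    rw [hv]
    have : Real.sqrt 5 / 2 * Real.sqrt (1/5) = 1/2 := by
      rw [show (1:ℝ)/5 = 5⁻¹ by norm_num, Real.sqrt_inv]
      rw [div_mul_eq_mul_div, mul_inv_cancel₀ s5pos.ne']
    rw [this]; ring
  have harctan : Real.arctan 2 = Real.arcsin (2/Real.sqrt 5) := by
    rw [Real.arctan_eq_arcsin]; norm_num
  rw [h1, h2, harctan]; ring
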